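/- arXiv:2210.10868 — 5 statements merged into one kernel-verified Lean document; each statement's English description precedes it below -/
import Mathlib

section
/- Let ū = (ū₁,…,ū_m) ∈ ℝ^m have all entries positive, let X ∈ ℝ^{m×m} be diagonal positive definite, let L ∈ ℝ^{m×(2n)}, and let z ∈ ℝ^{2n} satisfy |L_{(i)} z| ≤ ū_i for every i ∈ {1,…,m}, where L_{(i)} denotes the i-th row of L. Then for every u ∈ ℝ^m one has dz_ū(u)ᵀ X (dz_ū(u) + u + L z) ≤ 0. -/
open Matrix

/-- Decentralized saturation: `(sat_ū v)_i = sign(v_i) * min(|v_i|, ū_i)`. -/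
noncomputable def satv {m : ℕ} (ubar : Fin m → ℝ) (v : Fin m → ℝ) : Fin m → ℝ :=
  fun i => Real.sign (v i) * min |v i| (ubar i)

/-- Decentralized deadzone: `dz_ū v = sat_ū v - v`. -/
noncomputable def dzv {m : ℕ} (ubar : Fin m → ℝ) (v : Fin m → ℝ) : Fin m → ℝ :=
  fun i => satv ubar v i - v i

lemma scalar_sector (a v w : ℝ) (ha : 0 < a) (hw : |w| ≤ a) :
    (Real.sign v * min |v| a - v) * (Real.sign v * min |v| a + w) ≤ 0 := by
  rcases lt_trichotomy v 0 with hv | hv | hv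
  · rw [Real.sign_of_neg hv, abs_of_neg hv]
    rcases le_or_gt (-v) a with h | h
    · rw [min_eq_left h]; nlinarith
    · rw [min_eq_right h.le]
      have : w ≤ a := (abs_le.mp hw).2
      nlinarith
  · simp [hv, Real.sign_zero]
  · rw [Real.sign_of_pos hv, abs_of_pos hv]
    rcases le_or_gt v a with h | h
    · rw [min_eq_left h]; nlinarith
    · rw [min_eq_right h.le]
      have : -a ≤ w := (abs_le.mp hw).1
      nlinarith

/-- generalized sector condition. If `ū` has positive entries, `X` is a
diagonal positive definite `m × m` matrix, `L ∈ ℝ^{m × 2n}` and `z ∈ ℝ^{2n}` satisfies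
`|L_(i) z| ≤ ū_i` for all `i`, then for every `u ∈ ℝ^m`,
`dz_ū(u)ᵀ X (dz_ū(u) + u + L z) ≤ 0`. -/
theorem statement0 (m n : ℕ) (ubar : Fin m → ℝ) (hubar : ∀ i, 0 < ubar i)
    (X : Matrix (Fin m) (Fin m) ℝ) (hXdiag : X.IsDiag) (hXpos : X.PosDef)
    (L : Matrix (Fin m) (Fin (2 * n)) ℝ) (z : Fin (2 * n) → ℝ)
    (hz : ∀ i, |L i ⬝ᵥ z| ≤ ubar i) :
    ∀ u : Fin m → ℝ, dzv ubar u ⬝ᵥ (X *ᵥ (dzv ubar u + u + L *ᵥ z)) ≤ 0 := by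
  intro u
  have hdiag : ∀ w : Fin m → ℝ, ∀ i, (X *ᵥ w) i = X i i * w i := by
    intro w i
    simp only [mulVec, dotProduct]
    rw [Finset.sum_eq_single i]
    · intro j _ hj; rw [hXdiag (Ne.symm hj), zero_mul]
    · intro h; exact absurd (Finset.mem_univ i) h
  have hXii : ∀ i, 0 < X i i := by
    intro i
    have := hXpos.dotProduct_mulVec_pos (x := Pi.single i 1) (fun h => by have := congrFun h i; simp [Pi.single_eq_same] at this)
    simpa [dotProduct, hdiag, Pi.single_apply, Finset.sum_ite_eq', mul_comm] using this
  unfold dotProduct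
  apply Finset.sum_nonpos
  intro i _
  rw [hdiag]
  have key : dzv ubar u i * ((dzv ubar u + u + L *ᵥ z) i) ≤ 0 := by
    simp only [Pi.add_apply, dzv, satv]
    have : satv ubar u i - u i + u i + (L *ᵥ z) i
        = Real.sign (u i) * min |u i| (ubar i) + (L *ᵥ z) i := by
      simp [satv]
    simp only [satv] at this
    rw [this]
    exact scalar_sector (ubar i) (u i) ((L *ᵥ z) i) (hubar i) (hz i)
  nlinarith [hXii i, key]
end

section
/- Let μ̄, σ₁,…,σ_q be positive reals, R_i ∈ 𝕊^{n_i}₊ for i = 1,…,q, W ∈ 𝕊ⁿ₊, and Z, J ∈ ℝ^{m×n}. Define L := [Z W^{-1} J] ∈ ℝ^{m×(2n)}, R(τ) := ⊕_{i=1}^q e^{σ_i τ_i} R_i, P̂(τ) := W^{-1} ⊕ R(τ), 𝓛 := {x̄ ∈ ℝ^{2n} : |L_{(i)} x̄| ≤ ū_i for i = 1,…,m}, and Q_μ̄ := {(x̄, τ) ∈ ℝ^{2n} × T : x̄ᵀ P̂(τ) x̄ ≤ μ̄}. If for every i ∈ {1,…,m} the symmetric block matrix [[W, 0, Z_{(i)}ᵀ],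 [0, ⊕_{j=1}^q R_j, J_{(i)}ᵀ], [Z_{(i)}, J_{(i)}, ū_i²/μ̄]] is positive semidefinite, then Q_μ̄ ⊆ 𝓛 × T. -/
open Matrix


/-- Quadratic form of a block diagonal matrix splits as a sum. -/
lemma quad_blockDiagonal' {q : ℕ} {nd : Fin q → ℕ}
    (M : (i : Fin q) → Matrix (Fin (nd i)) (Fin (nd i)) ℝ)
    (v : ((i : Fin q) × Fin (nd i)) → ℝ) :
    v ⬝ᵥ (Matrix.blockDiagonal' M *ᵥ v) =
      ∑ i : Fin q, (fun a => v ⟨i, a⟩) ⬝ᵥ (M i *ᵥ fun a => v ⟨i, a⟩) := by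
  simp only [dotProduct, mulVec]
  rw [← Finset.univ_sigma_univ, Finset.sum_sigma]
  refine Finset.sum_congr rfl fun i _ => Finset.sum_congr rfl fun a _ => ?_
  congr 1
  rw [Finset.sum_sigma]
  rw [Finset.sum_eq_single_of_mem i (Finset.mem_univ i)]
  · simp [Matrix.blockDiagonal'_apply_eq]
  · intro j _ hj
    apply Finset.sum_eq_zero
    intro b _
    rw [Matrix.blockDiagonal'_apply_ne _ _ _ (Ne.symm hj), zero_mul]

/-- Lemma on the inclusion `Q_μ̄ ⊆ 𝓛 × T`.
The state space `ℝⁿ` with `n = n₁ + ⋯ + n_q` is modeled by the index type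
`(i : Fin q) × Fin (nd i)`; `ℝ^{2n}` by the sum of two copies of it.
`R(τ) = ⊕ᵢ e^{σᵢ τᵢ} Rᵢ`, `P̂(τ) = W⁻¹ ⊕ R(τ)`, `L = [Z W⁻¹  J]`.
If for every `i ∈ {1,…,m}` the block matrix
`[[W, 0, Z_(i)ᵀ], [0, ⊕ⱼ Rⱼ, J_(i)ᵀ], [Z_(i), J_(i), ūᵢ²/μ̄]]` is positive semidefinite,
then every `(x̄, τ)` with `τ ∈ T` and `x̄ᵀ P̂(τ) x̄ ≤ μ̄` satisfies `|L_(i) x̄| ≤ ūᵢ` for all `i`. -/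
theorem statement2 (q m : ℕ) (hq : 0 < q) (nd : Fin q → ℕ) (hnd : ∀ i, 0 < nd i)
    (T2 : Fin q → ℝ) (hT2 : ∀ i, 0 < T2 i)
    (ubar : Fin m → ℝ) (hubar : ∀ i, 0 < ubar i)
    (μ : ℝ) (hμ : 0 < μ) (σ : Fin q → ℝ) (hσ : ∀ i, 0 < σ i)
    (R : (i : Fin q) → Matrix (Fin (nd i)) (Fin (nd i)) ℝ) (hR : ∀ i, (R i).PosDef)
    (W : Matrix ((i : Fin q) × Fin (nd i)) ((i : Fin q) × Fin (nd i)) ℝ) (hW : W.PosDef)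
    (Z J : Matrix (Fin m) ((i : Fin q) × Fin (nd i)) ℝ)
    (hLMI : ∀ i : Fin m,
      (Matrix.fromBlocks
        (Matrix.fromBlocks W 0 0 (Matrix.blockDiagonal' R))
        (Matrix.replicateCol (Fin 1) (Sum.elim (Z i) (J i)))
        (Matrix.replicateRow (Fin 1) (Sum.elim (Z i) (J i)))
        (Matrix.of fun _ _ => ubar i ^ 2 / μ)).PosSemidef) :
    ∀ (x : ((i : Fin q) × Fin (nd i)) ⊕ ((i : Fin q) × Fin (nd i)) → ℝ) (τ : Fin q → ℝ),
      (∀ i, τ i ∈ Set.Icc 0 (T2 i)) →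
      x ⬝ᵥ ((Matrix.fromBlocks W⁻¹ 0 0
          (Matrix.blockDiagonal' fun i => Real.exp (σ i * τ i) • R i)) *ᵥ x) ≤ μ →
      ∀ i : Fin m, |Matrix.fromCols (Z * W⁻¹) J i ⬝ᵥ x| ≤ ubar i := by
  intro x τ hτ hx i
  let ι := (i : Fin q) × Fin (nd i)
  set x1 : ι → ℝ := x ∘ Sum.inl with hx1
  set x2 : ι → ℝ := x ∘ Sum.inr with hx2
  have hxe : x = Sum.elim x1 x2 := by funext j; cases j <;> rfl
  set y1 : ι → ℝ := W⁻¹ *ᵥ x1 with hy1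
  set y : ι ⊕ ι → ℝ := Sum.elim y1 x2 with hy
  set A := Matrix.fromBlocks W 0 0 (Matrix.blockDiagonal' R) with hA
  set s := Sum.elim (Z i) (J i) ⬝ᵥ y with hs
  -- quadratic form decompositions
  have quadP : ∀ (B C : Matrix ι ι ℝ) (u v : ι → ℝ),
      Sum.elim u v ⬝ᵥ (Matrix.fromBlocks B 0 0 C *ᵥ Sum.elim u v)
        = u ⬝ᵥ (B *ᵥ u) + v ⬝ᵥ (C *ᵥ v) := by
    intro B C u v
    rw [Matrix.fromBlocks_mulVec]
    simp [sumElim_dotProduct_sumElim]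
  -- W *ᵥ y1 = x1
  have hWy1 : W *ᵥ y1 = x1 := by
    rw [hy1, Matrix.mulVec_mulVec, Matrix.mul_nonsing_inv _ hW.det_pos.ne'.isUnit, Matrix.one_mulVec]
  -- a := yᵀ A y ≤ μ and 0 ≤ a
  have hchain : y ⬝ᵥ (A *ᵥ y) ≤ μ := by
    have h1 : y ⬝ᵥ (A *ᵥ y) = x1 ⬝ᵥ (W⁻¹ *ᵥ x1)
        + ∑ j : Fin q, (fun a => x2 ⟨j, a⟩) ⬝ᵥ (R j *ᵥ fun a => x2 ⟨j, a⟩) := by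
      rw [hy, hA, quadP, hWy1, quad_blockDiagonal']
      rw [dotProduct_comm y1 x1]
    have h2 : x ⬝ᵥ ((Matrix.fromBlocks W⁻¹ 0 0
          (Matrix.blockDiagonal' fun i => Real.exp (σ i * τ i) • R i)) *ᵥ x)
        = x1 ⬝ᵥ (W⁻¹ *ᵥ x1)
        + ∑ j : Fin q, (fun a => x2 ⟨j, a⟩) ⬝ᵥ ((Real.exp (σ j * τ j) • R j) *ᵥ fun a => x2 ⟨j, a⟩) := by
      rw [hxe, quadP, quad_blockDiagonal']
    rw [h2] at hx
    refine le_trans ?_ hx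
    rw [h1]
    gcongr with j hj
    have hRq : (0:ℝ) ≤ (fun a => x2 ⟨j, a⟩) ⬝ᵥ (R j *ᵥ fun a => x2 ⟨j, a⟩) := by
      simpa using (hR j).posSemidef.dotProduct_mulVec_nonneg (fun a => x2 ⟨j, a⟩)
    have he : (1:ℝ) ≤ Real.exp (σ j * τ j) := by
      rw [Real.one_le_exp_iff]
      exact mul_nonneg (hσ j).le (hτ j).1
    calc (fun a => x2 ⟨j, a⟩) ⬝ᵥ (R j *ᵥ fun a => x2 ⟨j, a⟩)
        = 1 * ((fun a => x2 ⟨j, a⟩) ⬝ᵥ (R j *ᵥ fun a => x2 ⟨j, a⟩)) := by ring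
      _ ≤ Real.exp (σ j * τ j) * ((fun a => x2 ⟨j, a⟩) ⬝ᵥ (R j *ᵥ fun a => x2 ⟨j, a⟩)) := by
          exact mul_le_mul_of_nonneg_right he hRq
      _ = (fun a => x2 ⟨j, a⟩) ⬝ᵥ ((Real.exp (σ j * τ j) • R j) *ᵥ fun a => x2 ⟨j, a⟩) := by
          rw [Matrix.smul_mulVec, dotProduct_smul, smul_eq_mul]
  have ha0 : 0 ≤ y ⬝ᵥ (A *ᵥ y) := by
    rw [hy, hA, quadP]
    have h1 : 0 ≤ y1 ⬝ᵥ (W *ᵥ y1) := by simpa using hW.posSemidef.dotProduct_mulVec_nonneg y1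
    have h2 : 0 ≤ x2 ⬝ᵥ (Matrix.blockDiagonal' R *ᵥ x2) := by
      rw [quad_blockDiagonal']
      refine Finset.sum_nonneg fun j _ => ?_
      simpa using (hR j).posSemidef.dotProduct_mulVec_nonneg (fun a => x2 ⟨j, a⟩)
    exact add_nonneg h1 h2
  -- s equals the target dot product
  have hsgoal : Matrix.fromCols (Z * W⁻¹) J i ⬝ᵥ x = s := by
    rw [hxe, hs, hy]
    have : Matrix.fromCols (Z * W⁻¹) J i = Sum.elim ((Z * W⁻¹) i) (J i) := by
      funext j; cases j <;> rfl
    rw [this, sumElim_dotProduct_sumElim, sumElim_dotProduct_sumElim]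
    congr 1
    have : (Z * W⁻¹) i ⬝ᵥ x1 = ((Z * W⁻¹) *ᵥ x1) i := rfl
    rw [this, ← Matrix.mulVec_mulVec]
    rfl
  -- the quadratic inequality from PSD
  set c : ℝ := ubar i ^ 2 / μ with hc
  have hc0 : 0 < c := div_pos (pow_pos (hubar i) 2) hμ
  have hquad : ∀ t : ℝ, 0 ≤ y ⬝ᵥ (A *ᵥ y) + 2 * s * t + c * t ^ 2 := by
    intro t
    have := (hLMI i).dotProduct_mulVec_nonneg (Sum.elim y (fun _ => t))
    rw [show star (Sum.elim y fun _ => t) = Sum.elim y fun _ => t from star_trivial _] at this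
    rw [Matrix.fromBlocks_mulVec] at this
    simp only [Sum.elim_comp_inl, Sum.elim_comp_inr] at this
    rw [sumElim_dotProduct_sumElim] at this
    have hcol : (Matrix.replicateCol (Fin 1) (Sum.elim (Z i) (J i)) *ᵥ fun _ => t)
        = fun j => Sum.elim (Z i) (J i) j * t := by
      funext j; simp [Matrix.mulVec, Matrix.replicateCol, dotProduct]
    have hrow : (Matrix.replicateRow (Fin 1) (Sum.elim (Z i) (J i)) *ᵥ y) = fun _ => s := by
      funext j; simp [Matrix.mulVec, Matrix.replicateRow, hs]
    have hcc : ((Matrix.of fun _ _ => c : Matrix (Fin 1) (Fin 1) ℝ) *ᵥ fun _ => t)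
        = fun _ => c * t := by
      funext j; simp [Matrix.mulVec, dotProduct]
    rw [hcol, hrow, hcc] at this
    have e1 : y ⬝ᵥ (A *ᵥ y + fun j => Sum.elim (Z i) (J i) j * t)
        = y ⬝ᵥ (A *ᵥ y) + s * t := by
      rw [dotProduct_add]
      congr 1
      rw [hs]
      simp only [dotProduct, Finset.sum_mul]
      exact Finset.sum_congr rfl fun j _ => by ring
    have e2 : (fun (_ : Fin 1) => t) ⬝ᵥ ((fun _ => s) + fun _ => c * t)
        = t * (s + c * t) := by
      simp [dotProduct]
    rw [e1, e2] at this
    nlinarith [this]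
  -- conclude
  have hsq : s ^ 2 ≤ ubar i ^ 2 := by
    have h := hquad (-(s / c))
    have hkey : s ^ 2 ≤ y ⬝ᵥ (A *ᵥ y) * c := by
      have e : y ⬝ᵥ (A *ᵥ y) + 2 * s * (-(s / c)) + c * (-(s / c)) ^ 2
          = y ⬝ᵥ (A *ᵥ y) - s ^ 2 / c := by
        field_simp
        ring
      rw [e] at h
      have h2 : s ^ 2 / c ≤ y ⬝ᵥ (A *ᵥ y) := by linarith
      calc s ^ 2 = s ^ 2 / c * c := by field_simp
        _ ≤ y ⬝ᵥ (A *ᵥ y) * c := by nlinarith [hc0]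
    calc s ^ 2 ≤ y ⬝ᵥ (A *ᵥ y) * c := hkey
      _ ≤ μ * c := by nlinarith [hchain, hc0]
      _ = ubar i ^ 2 := by rw [hc]; field_simp [hμ.ne']
  rw [hsgoal, abs_le]
  constructor <;> nlinarith [hsq, hubar i, abs_nonneg s]
end

section
/- Let μ̄ > 0, R_i ∈ 𝕊^{n_i}₊ for i = 1,…,q, W ∈ 𝕊ⁿ₊, Z, J ∈ ℝ^{m×n}, and set R̂ := ⊕_{i=1}^q R_i, P̂(0) := W^{-1} ⊕ R̂, and L := [Z W^{-1} J] ∈ ℝ^{m×(2n)}. If for an index i ∈ {1,…,m} the symmetric block matrix [[W, 0, Z_{(i)}ᵀ], [0, R̂, J_{(i)}ᵀ], [Z_{(i)}, J_{(i)}, ū_i²/μ̄]] is positive semidefinite, then (1/μ̄) P̂(0) − (1/ū_i²) L_{(i)}ᵀ L_{(i)} is positive semidefinite. -/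
open Matrix

/-- Schur-complement step. With `R̂ = ⊕ᵢ Rᵢ`, `P̂(0) = W⁻¹ ⊕ R̂`,
`L = [Z W⁻¹  J]`, if for an index `i` the block matrix
`[[W, 0, Z_(i)ᵀ], [0, R̂, J_(i)ᵀ], [Z_(i), J_(i), ūᵢ²/μ̄]]` is positive semidefinite,
then `(1/μ̄) P̂(0) − (1/ūᵢ²) L_(i)ᵀ L_(i)` is positive semidefinite. -/
theorem statement3 (q m : ℕ) (nd : Fin q → ℕ) (hnd : ∀ i, 0 < nd i)
    (ubar : Fin m → ℝ) (hubar : ∀ i, 0 < ubar i)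
    (μ : ℝ) (hμ : 0 < μ)
    (R : (i : Fin q) → Matrix (Fin (nd i)) (Fin (nd i)) ℝ) (hR : ∀ i, (R i).PosDef)
    (W : Matrix ((i : Fin q) × Fin (nd i)) ((i : Fin q) × Fin (nd i)) ℝ) (hW : W.PosDef)
    (Z J : Matrix (Fin m) ((i : Fin q) × Fin (nd i)) ℝ)
    (i : Fin m)
    (hLMI :
      (Matrix.fromBlocks
        (Matrix.fromBlocks W 0 0 (Matrix.blockDiagonal' R))
        (Matrix.replicateCol (Fin 1) (Sum.elim (Z i) (J i)))
        (Matrix.replicateRow (Fin 1) (Sum.elim (Z i) (J i)))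
        (Matrix.of fun _ _ => ubar i ^ 2 / μ)).PosSemidef) :
    ((1 / μ) • Matrix.fromBlocks W⁻¹ 0 0 (Matrix.blockDiagonal' R) -
      (ubar i ^ 2)⁻¹ •
        Matrix.vecMulVec (Matrix.fromCols (Z * W⁻¹) J i)
          (Matrix.fromCols (Z * W⁻¹) J i)).PosSemidef := by
  obtain ⟨hHerm, hQ⟩ := Matrix.posSemidef_iff_dotProduct_mulVec.mp hLMI
  have hu0 : (0:ℝ) < ubar i ^ 2 := pow_pos (hubar i) 2
  have hWinv : W⁻¹.IsHermitian := hW.1.inv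
  have hRbH : (Matrix.blockDiagonal' R).IsHermitian := by
    have : ∀ j, (R j)ᵀ = R j := fun j => by
      have := (hR j).1; rwa [Matrix.IsHermitian, conjTranspose_eq_transpose_of_trivial] at this
    rw [Matrix.IsHermitian, conjTranspose_eq_transpose_of_trivial,
      Matrix.blockDiagonal'_transpose]
    exact congrArg Matrix.blockDiagonal' (funext fun j => this j)
  have hWinvT : W⁻¹ᵀ = W⁻¹ := by
    have := hWinv; rwa [Matrix.IsHermitian, conjTranspose_eq_transpose_of_trivial] at this
  have hWmul : W * W⁻¹ = 1 := Matrix.mul_nonsing_inv W hW.det_pos.ne'.isUnit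
  set c : ((i : Fin q) × Fin (nd i)) ⊕ ((i : Fin q) × Fin (nd i)) → ℝ :=
    Sum.elim (Z i) (J i) with hc
  set v : ((i : Fin q) × Fin (nd i)) ⊕ ((i : Fin q) × Fin (nd i)) → ℝ :=
    Matrix.fromCols (Z * W⁻¹) J i with hv
  refine Matrix.posSemidef_iff_dotProduct_mulVec.mpr ⟨?_, ?_⟩
  · have hvvT : (Matrix.vecMulVec v v)ᵀ = Matrix.vecMulVec v v := by
      ext a b; simp [Matrix.vecMulVec_apply, mul_comm]
    rw [Matrix.IsHermitian, conjTranspose_eq_transpose_of_trivial,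
      Matrix.transpose_sub, Matrix.transpose_smul, Matrix.transpose_smul,
      Matrix.fromBlocks_transpose, hvvT]
    have hRbT : (Matrix.blockDiagonal' R)ᵀ = Matrix.blockDiagonal' R := by
      have := hRbH; rwa [Matrix.IsHermitian, conjTranspose_eq_transpose_of_trivial] at this
    rw [hWinvT, hRbT]
    simp
  · intro x
    set x₁ : (i : Fin q) × Fin (nd i) → ℝ := x ∘ Sum.inl with hx₁
    set x₂ : (i : Fin q) × Fin (nd i) → ℝ := x ∘ Sum.inr with hx₂
    have hxe : x = Sum.elim x₁ x₂ := by funext j; cases j <;> rfl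
    set u : (i : Fin q) × Fin (nd i) → ℝ := W⁻¹ *ᵥ x₁ with hu'
    set s : ℝ := v ⬝ᵥ x with hs
    set d : ℝ := ubar i ^ 2 with hd
    set t : ℝ := -(μ / d) * s with ht
    have hZu : (Z * W⁻¹) i ⬝ᵥ x₁ = Z i ⬝ᵥ u := by
      have h3 : (Z * W⁻¹) i ⬝ᵥ x₁ = ((Z * W⁻¹) *ᵥ x₁) i := rfl
      rw [h3, ← Matrix.mulVec_mulVec]
      rfl
    have hcy : c ⬝ᵥ Sum.elim u x₂ = s := by
      have h1 : s = (Z * W⁻¹) i ⬝ᵥ x₁ + J i ⬝ᵥ x₂ := by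
        rw [hs, hxe, hv]
        rw [show Matrix.fromCols (Z * W⁻¹) J i
            = Sum.elim ((Z * W⁻¹) i) (J i) from funext fun j => by cases j <;> rfl]
        rw [sumElim_dotProduct_sumElim]
      rw [h1, hZu, hc, sumElim_dotProduct_sumElim]
    have hWu : W *ᵥ u = x₁ := by
      rw [hu', Matrix.mulVec_mulVec, hWmul, Matrix.one_mulVec]
    have hquadW : u ⬝ᵥ (W *ᵥ u) = x₁ ⬝ᵥ (W⁻¹ *ᵥ x₁) := by
      rw [hWu, dotProduct_comm, hu']
    -- plug the test vector into hQ
    have key := hQ (Sum.elim (Sum.elim u x₂) (fun _ => t))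
    rw [star_trivial, Matrix.fromBlocks_mulVec, sumElim_dotProduct_sumElim,
      Matrix.fromBlocks_mulVec] at key
    simp only [Sum.elim_comp_inl, Sum.elim_comp_inr, Matrix.zero_mulVec, add_zero,
      zero_add] at key
    have hcolv : (Matrix.replicateCol (Fin 1) c *ᵥ fun _ => t) = t • c := by
      funext j
      simp [Matrix.mulVec, Matrix.replicateCol, dotProduct, mul_comm]
    rw [hcolv, dotProduct_add, sumElim_dotProduct_sumElim,
      dotProduct_smul, dotProduct_comm (Sum.elim u x₂) c, hcy] at key
    have hlast : ((fun _ : Fin 1 => t) ⬝ᵥ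
        (Matrix.replicateRow (Fin 1) c *ᵥ Sum.elim u x₂ +
          (Matrix.of fun _ _ => d / μ : Matrix (Fin 1) (Fin 1) ℝ) *ᵥ fun _ => t))
        = t * (s + d / μ * t) := by
      rw [Matrix.replicateRow_mulVec_eq_const, hcy]
      simp [Matrix.mulVec, dotProduct, hd]
    rw [hlast, hquadW] at key
    -- the goal quadratic form
    have hvv : Matrix.vecMulVec v v *ᵥ x = (v ⬝ᵥ x) • v := by
      funext j
      simp only [Matrix.mulVec, dotProduct, Matrix.vecMulVec_apply, Pi.smul_apply,
        smul_eq_mul, Finset.mul_sum, Finset.sum_mul]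
      exact Finset.sum_congr rfl fun k _ => by ring
    simp only [star_trivial]
    rw [Matrix.sub_mulVec, dotProduct_sub, Matrix.smul_mulVec,
      dotProduct_smul, Matrix.smul_mulVec, dotProduct_smul, hvv,
      dotProduct_smul, ← hs, dotProduct_comm x v, ← hs]
    have hP : x ⬝ᵥ (Matrix.fromBlocks W⁻¹ 0 0 (Matrix.blockDiagonal' R) *ᵥ x)
        = x₁ ⬝ᵥ (W⁻¹ *ᵥ x₁) + x₂ ⬝ᵥ (Matrix.blockDiagonal' R *ᵥ x₂) := by
      conv_lhs => rw [hxe]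
      rw [Matrix.fromBlocks_mulVec, sumElim_dotProduct_sumElim]
      simp only [Sum.elim_comp_inl, Sum.elim_comp_inr, Matrix.zero_mulVec, add_zero,
        zero_add]
    rw [hP]
    set Q1 : ℝ := x₁ ⬝ᵥ (W⁻¹ *ᵥ x₁) with hQ1
    set Q2 : ℝ := x₂ ⬝ᵥ (Matrix.blockDiagonal' R *ᵥ x₂) with hQ2
    simp only [smul_eq_mul] at key ⊢
    have hd0 : d ≠ 0 := ne_of_gt hu0
    have hμ0 : μ ≠ 0 := ne_of_gt hμ
    have ht0 : t * s + t * (s + d / μ * t) = -(μ / d * (s * s)) := by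
      rw [ht]; field_simp; ring
    have hkey2 : μ / d * (s * s) ≤ Q1 + Q2 := by linarith [key, ht0]
    rw [sub_nonneg]
    calc d⁻¹ * (s * s) = 1 / μ * (μ / d * (s * s)) := by field_simp
      _ ≤ 1 / μ * (Q1 + Q2) := by
          apply mul_le_mul_of_nonneg_left hkey2
          positivity
end

section
/- Let A ∈ ℝ^{n×n}, B ∈ ℝ^{n×m}, K ∈ ℝ^{m×n}, W ∈ 𝕊ⁿ₊, R_i ∈ 𝕊^{n_i}₊ for i = 1,…,q, S ∈ ℝ^{m×m} diagonal positive definite, σ₁,…,σ_q > 0, and Z, J ∈ ℝ^{m×n}. Set R(τ) := ⊕_{i=1}^q e^{σ_i τ_i} R_i, Σ := ⊕_{i=1}^q σ_i I_{n_i}, L := [Z W^{-1} J], and for τ ∈ T let M(τ) be the symmetric block matrix [[He((A+BK)W), −BK, BS − WKᵀ − Zᵀ], [⋆, He(R(τ)A) − Σ R(τ), Kᵀ − Jᵀ], [⋆, ⋆, −2S]]. Suppose M(τ) ≺ 0 for all τ ∈ T. Then there exists c₃ > 0 such that for all τ ∈ T and all x_p, η̃ ∈ ℝⁿ with |L_{(i)}(x_p,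 η̃)| ≤ ū_i for every i ∈ {1,…,m}, one has 2 x_pᵀ W^{-1} ((A+BK)x_p − BK η̃ + B·dz_ū(K x_p − K η̃)) + η̃ᵀ (He(R(τ)A) − Σ R(τ)) η̃ ≤ −c₃ (|x_p|² + |η̃|²). -/
open Matrix

/-- `R(τ) = ⊕ᵢ e^{σᵢ τᵢ} Rᵢ` as a block-diagonal matrix. -/
noncomputable def Rmat {q : ℕ} (nd : Fin q → ℕ) (σ : Fin q → ℝ)
    (R : (i : Fin q) → Matrix (Fin (nd i)) (Fin (nd i)) ℝ) (τ : Fin q → ℝ) :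
    Matrix ((i : Fin q) × Fin (nd i)) ((i : Fin q) × Fin (nd i)) ℝ :=
  Matrix.blockDiagonal' fun i => Real.exp (σ i * τ i) • R i

/-- `Σ = ⊕ᵢ σᵢ I_{nᵢ}` as a block-diagonal matrix. -/
noncomputable def Sig {q : ℕ} (nd : Fin q → ℕ) (σ : Fin q → ℝ) :
    Matrix ((i : Fin q) × Fin (nd i)) ((i : Fin q) × Fin (nd i)) ℝ :=
  Matrix.blockDiagonal' fun i => σ i • (1 : Matrix (Fin (nd i)) (Fin (nd i)) ℝ)

lemma dot_flip {α β : Type*} [Fintype α] [Fintype β] (u : α → ℝ) (N : Matrix α β ℝ) (v : β → ℝ) :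
    u ⬝ᵥ (N *ᵥ v) = v ⬝ᵥ (Nᵀ *ᵥ u) := by
  rw [Matrix.dotProduct_mulVec, ← Matrix.mulVec_transpose, dotProduct_comm]

lemma sector_aux (a b u : ℝ) (hu : 0 < u) (hb : |b| ≤ u) :
    (Real.sign a * min |a| u - a) * ((Real.sign a * min |a| u - a) + a + b) ≤ 0 := by
  obtain ⟨hb1, hb2⟩ := abs_le.mp hb
  rcases lt_trichotomy a 0 with ha | rfl | ha
  · rw [Real.sign_of_neg ha, abs_of_neg ha]
    rcases le_or_gt (-a) u with h | h
    · rw [min_eq_left h]; nlinarith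
    · rw [min_eq_right h.le]; nlinarith
  · simp
  · rw [Real.sign_of_pos ha, abs_of_pos ha]
    rcases le_or_gt a u with h | h
    · rw [min_eq_left h]; nlinarith
    · rw [min_eq_right h.le]; nlinarith

lemma posdef_dot {α : Type*} [Fintype α] {P : Matrix α α ℝ}
    (hP : P.PosDef) {x : α → ℝ} (hx : x ≠ 0) : 0 < x ⬝ᵥ (P *ᵥ x) := by
  simpa using hP.dotProduct_mulVec_pos hx

lemma dot_self_nonneg {α : Type*} [Fintype α] (x : α → ℝ) : 0 ≤ x ⬝ᵥ x :=
  Finset.sum_nonneg fun _ _ => mul_self_nonneg _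

lemma dot_self_pos {α : Type*} [Fintype α] {x : α → ℝ} (hx : x ≠ 0) : 0 < x ⬝ᵥ x :=
  lt_of_le_of_ne (dot_self_nonneg x) (fun h => hx (dotProduct_self_eq_zero.mp h.symm))

lemma exists_coercive {q : ℕ} {ι : Type*} [Fintype ι] [DecidableEq ι] [Nonempty ι]
    (T2 : Fin q → ℝ) (hT2 : ∀ i, 0 ≤ T2 i)
    (g : (Fin q → ℝ) → Matrix ι ι ℝ)
    (hgc : ∀ a b, Continuous fun τ => g τ a b)
    (hgp : ∀ τ, (∀ i, τ i ∈ Set.Icc 0 (T2 i)) → (g τ).PosDef) :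
    ∃ c > (0:ℝ), ∀ τ, (∀ i, τ i ∈ Set.Icc 0 (T2 i)) → ∀ ξ : ι → ℝ,
      c * (ξ ⬝ᵥ ξ) ≤ ξ ⬝ᵥ (g τ *ᵥ ξ) := by
  classical
  set Tset : Set (Fin q → ℝ) := Set.pi Set.univ fun i => Set.Icc 0 (T2 i) with hTdef
  set Sset : Set (ι → ℝ) := {ξ | ξ ⬝ᵥ ξ = 1} with hSdef
  have hdcont : Continuous fun ξ : ι → ℝ => ξ ⬝ᵥ ξ := by
    simp only [dotProduct]
    exact continuous_finset_sum _ fun i _ => (continuous_apply i).mul (continuous_apply i)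
  have hTco : IsCompact Tset := isCompact_univ_pi fun i => isCompact_Icc
  have hScl : IsClosed Sset := isClosed_eq hdcont continuous_const
  have hSsub : Sset ⊆ Metric.closedBall 0 1 := by
    intro ξ hξ
    rw [Metric.mem_closedBall, dist_zero_right]
    rw [pi_norm_le_iff_of_nonneg (by norm_num : (0:ℝ) ≤ 1)]
    intro i
    rw [Real.norm_eq_abs, abs_le_one_iff_mul_self_le_one]
    have : ξ i * ξ i ≤ ξ ⬝ᵥ ξ :=
      Finset.single_le_sum (f := fun j => ξ j * ξ j) (fun j _ => mul_self_nonneg _)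
        (Finset.mem_univ i)
    have h1 : ξ ⬝ᵥ ξ = 1 := hξ
    linarith
  have hSco : IsCompact Sset :=
    (isCompact_closedBall (0 : ι → ℝ) 1).of_isClosed_subset hScl hSsub
  have hKco : IsCompact (Tset ×ˢ Sset) := hTco.prod hSco
  have hne : (Tset ×ˢ Sset).Nonempty := by
    refine ⟨((fun _ => 0), Pi.single (Classical.arbitrary ι) 1), ?_, ?_⟩
    · intro i _; exact ⟨le_refl _, hT2 i⟩
    · show Pi.single (Classical.arbitrary ι) (1:ℝ) ⬝ᵥ Pi.single (Classical.arbitrary ι) 1 = 1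
      rw [single_dotProduct, Pi.single_eq_same, one_mul]
  have hFcont : Continuous fun p : (Fin q → ℝ) × (ι → ℝ) => p.2 ⬝ᵥ (g p.1 *ᵥ p.2) := by
    simp only [dotProduct, Matrix.mulVec]
    refine continuous_finset_sum _ fun a _ => ?_
    exact ((continuous_apply a).comp continuous_snd).mul
      (continuous_finset_sum _ fun b _ =>
        ((hgc a b).comp continuous_fst).mul ((continuous_apply b).comp continuous_snd))
  obtain ⟨p₀, hp₀, hmin⟩ := hKco.exists_isMinOn hne hFcont.continuousOn
  have hp₀T : ∀ i, p₀.1 i ∈ Set.Icc 0 (T2 i) := fun i => hp₀.1 i (Set.mem_univ i)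
  have hp₀S : p₀.2 ⬝ᵥ p₀.2 = 1 := hp₀.2
  have hp₀ne : p₀.2 ≠ 0 := by
    intro h; rw [h] at hp₀S; simp at hp₀S
  have hc : 0 < p₀.2 ⬝ᵥ (g p₀.1 *ᵥ p₀.2) := posdef_dot (hgp p₀.1 hp₀T) hp₀ne
  refine ⟨_, hc, ?_⟩
  intro τ hτ ξ
  by_cases hξ : ξ = 0
  · simp [hξ]
  · have ht : 0 < ξ ⬝ᵥ ξ := dot_self_pos hξ
    set s : ℝ := Real.sqrt (ξ ⬝ᵥ ξ) with hsdef
    have hs : 0 < s := Real.sqrt_pos.mpr ht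
    have hss : s * s = ξ ⬝ᵥ ξ := Real.mul_self_sqrt ht.le
    have hmem : (τ, s⁻¹ • ξ) ∈ Tset ×ˢ Sset := by
      refine ⟨fun i _ => hτ i, ?_⟩
      show (s⁻¹ • ξ) ⬝ᵥ (s⁻¹ • ξ) = 1
      rw [smul_dotProduct, dotProduct_smul, smul_eq_mul, smul_eq_mul, ← hss]
      field_simp
    have hle : p₀.2 ⬝ᵥ (g p₀.1 *ᵥ p₀.2) ≤ (s⁻¹ • ξ) ⬝ᵥ (g τ *ᵥ (s⁻¹ • ξ)) := hmin hmem
    have heq : (s⁻¹ • ξ) ⬝ᵥ (g τ *ᵥ (s⁻¹ • ξ)) = s⁻¹ * (s⁻¹ * (ξ ⬝ᵥ (g τ *ᵥ ξ))) := by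
      rw [Matrix.mulVec_smul, smul_dotProduct, dotProduct_smul]
      simp [smul_eq_mul]
    rw [heq] at hle
    have hs' : s ≠ 0 := hs.ne'
    calc (p₀.2 ⬝ᵥ (g p₀.1 *ᵥ p₀.2)) * (ξ ⬝ᵥ ξ)
        ≤ (s⁻¹ * (s⁻¹ * (ξ ⬝ᵥ (g τ *ᵥ ξ)))) * (ξ ⬝ᵥ ξ) :=
          mul_le_mul_of_nonneg_right hle ht.le
      _ = ξ ⬝ᵥ (g τ *ᵥ ξ) := by rw [← hss]; field_simp

set_option maxHeartbeats 1000000 in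
/-- if the clock-dependent matrix
`M(τ) = [[He((A+BK)W), −BK, BS − WKᵀ − Zᵀ], [⋆, He(R(τ)A) − Σ R(τ), Kᵀ − Jᵀ], [⋆, ⋆, −2S]]`
is negative definite for all `τ ∈ T = ∏ᵢ [0, T₂⁽ⁱ⁾]`, then there exists `c₃ > 0` such that
for all `τ ∈ T` and all `x_p, η̃` with `|L_(i)(x_p, η̃)| ≤ ūᵢ` (where `L = [Z W⁻¹  J]`),
`2 x_pᵀ W⁻¹ ((A+BK)x_p − BK η̃ + B dz_ū(K x_p − K η̃)) + η̃ᵀ (He(R(τ)A) − Σ R(τ)) η̃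
  ≤ −c₃ (|x_p|² + |η̃|²)`. -/
theorem statement5 (q m : ℕ) (hq : 0 < q) (nd : Fin q → ℕ) (hnd : ∀ i, 0 < nd i)
    (T2 : Fin q → ℝ) (hT2 : ∀ i, 0 < T2 i)
    (ubar : Fin m → ℝ) (hubar : ∀ i, 0 < ubar i)
    (A : Matrix ((i : Fin q) × Fin (nd i)) ((i : Fin q) × Fin (nd i)) ℝ)
    (B : Matrix ((i : Fin q) × Fin (nd i)) (Fin m) ℝ)
    (K : Matrix (Fin m) ((i : Fin q) × Fin (nd i)) ℝ)
    (W : Matrix ((i : Fin q) × Fin (nd i)) ((i : Fin q) × Fin (nd i)) ℝ) (hW : W.PosDef)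
    (R : (i : Fin q) → Matrix (Fin (nd i)) (Fin (nd i)) ℝ) (hR : ∀ i, (R i).PosDef)
    (S : Matrix (Fin m) (Fin m) ℝ) (hSdiag : S.IsDiag) (hSpos : S.PosDef)
    (σ : Fin q → ℝ) (hσ : ∀ i, 0 < σ i)
    (Z J : Matrix (Fin m) ((i : Fin q) × Fin (nd i)) ℝ)
    (hM : ∀ τ : Fin q → ℝ, (∀ i, τ i ∈ Set.Icc 0 (T2 i)) →
      (-(Matrix.fromBlocks
          (Matrix.fromBlocks
            ((A + B * K) * W + ((A + B * K) * W)ᵀ)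
            (-(B * K))
            (-(B * K))ᵀ
            (Rmat nd σ R τ * A + (Rmat nd σ R τ * A)ᵀ - Sig nd σ * Rmat nd σ R τ))
          (Matrix.fromRows (B * S - W * Kᵀ - Zᵀ) (Kᵀ - Jᵀ))
          (Matrix.fromRows (B * S - W * Kᵀ - Zᵀ) (Kᵀ - Jᵀ))ᵀ
          (-(2 : ℝ) • S))).PosDef) :
    ∃ c₃ > (0 : ℝ), ∀ τ : Fin q → ℝ, (∀ i, τ i ∈ Set.Icc 0 (T2 i)) →
      ∀ xp ηt : ((i : Fin q) × Fin (nd i)) → ℝ,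
        (∀ i : Fin m, |Matrix.fromCols (Z * W⁻¹) J i ⬝ᵥ Sum.elim xp ηt| ≤ ubar i) →
        2 * (xp ⬝ᵥ (W⁻¹ *ᵥ ((A + B * K) *ᵥ xp - (B * K) *ᵥ ηt +
              B *ᵥ dzv ubar (K *ᵥ xp - K *ᵥ ηt)))) +
          ηt ⬝ᵥ ((Rmat nd σ R τ * A + (Rmat nd σ R τ * A)ᵀ -
              Sig nd σ * Rmat nd σ R τ) *ᵥ ηt) ≤
          -c₃ * (xp ⬝ᵥ xp + ηt ⬝ᵥ ηt) := by
  classical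
  haveI : Nonempty ((i : Fin q) × Fin (nd i)) := ⟨⟨⟨0, hq⟩, ⟨0, hnd _⟩⟩⟩
  have hWs : Wᵀ = W := by
    have h := hW.1
    rwa [Matrix.IsHermitian, Matrix.conjTranspose_eq_transpose_of_trivial] at h
  have hWdet : IsUnit W.det := isUnit_iff_ne_zero.mpr hW.det_pos.ne'
  have hWinv : W * W⁻¹ = 1 := Matrix.mul_nonsing_inv _ hWdet
  -- continuity of the entries of the block matrix
  have hRc : ∀ x y : (i : Fin q) × Fin (nd i), Continuous fun τ => Rmat nd σ R τ x y := by
    rintro ⟨i, a⟩ ⟨j, b⟩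
    by_cases h : i = j
    · subst h
      have he : ∀ τ : Fin q → ℝ, Rmat nd σ R τ ⟨i, a⟩ ⟨i, b⟩ = Real.exp (σ i * τ i) * R i a b :=
        fun τ => by simp [Rmat, Matrix.blockDiagonal'_apply_eq]
      simp only [he]
      exact (Real.continuous_exp.comp (continuous_const.mul (continuous_apply i))).mul
        continuous_const
    · have he : ∀ τ : Fin q → ℝ, Rmat nd σ R τ ⟨i, a⟩ ⟨j, b⟩ = 0 :=
        fun τ => Matrix.blockDiagonal'_apply_ne _ _ _ h
      simp only [he]
      exact continuous_const
  have hDc : ∀ x y : (i : Fin q) × Fin (nd i),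
      Continuous fun τ => (Rmat nd σ R τ * A + (Rmat nd σ R τ * A)ᵀ -
        Sig nd σ * Rmat nd σ R τ) x y := by
    intro x y
    simp only [Matrix.sub_apply, Matrix.add_apply, Matrix.transpose_apply, Matrix.mul_apply]
    exact ((continuous_finset_sum _ fun k _ => (hRc x k).mul continuous_const).add
      (continuous_finset_sum _ fun k _ => (hRc y k).mul continuous_const)).sub
      (continuous_finset_sum _ fun k _ => continuous_const.mul (hRc k y))
  have hgc : ∀ a b, Continuous fun τ : Fin q → ℝ =>
      (-(Matrix.fromBlocks
          (Matrix.fromBlocks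
            ((A + B * K) * W + ((A + B * K) * W)ᵀ)
            (-(B * K))
            (-(B * K))ᵀ
            (Rmat nd σ R τ * A + (Rmat nd σ R τ * A)ᵀ - Sig nd σ * Rmat nd σ R τ))
          (Matrix.fromRows (B * S - W * Kᵀ - Zᵀ) (Kᵀ - Jᵀ))
          (Matrix.fromRows (B * S - W * Kᵀ - Zᵀ) (Kᵀ - Jᵀ))ᵀ
          (-(2 : ℝ) • S))) a b := by
    intro a b
    simp only [Matrix.neg_apply]
    refine Continuous.neg ?_
    rcases a with (a | a) | a <;> rcases b with (b | b) | b <;>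
      simp only [Matrix.fromBlocks_apply₁₁, Matrix.fromBlocks_apply₁₂,
        Matrix.fromBlocks_apply₂₁, Matrix.fromBlocks_apply₂₂, Matrix.transpose_apply,
        Matrix.fromRows_apply_inl, Matrix.fromRows_apply_inr] <;>
      first
        | exact hDc _ _
        | exact continuous_const
  obtain ⟨c₀, hc₀, hco⟩ := exists_coercive T2 (fun i => (hT2 i).le) _ hgc hM
  -- diagonal facts about S
  have hSd : ∀ i, 0 < S i i := by
    intro i
    have hne : (Pi.single i 1 : Fin m → ℝ) ≠ 0 := by
      intro h
      have := congrFun h i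
      simp at this
    have h := hSpos.dotProduct_mulVec_pos hne
    simpa [Matrix.mulVec_single, single_dotProduct] using h
  have hSmv : ∀ u : Fin m → ℝ, S *ᵥ u = fun i => S i i * u i := by
    intro u; funext i
    simp only [Matrix.mulVec, dotProduct]
    rw [Finset.sum_eq_single i]
    · intro j _ hj; rw [hSdiag (Ne.symm hj), zero_mul]
    · intro h; exact absurd (Finset.mem_univ i) h
  -- the constant
  set CW : ℝ := (∑ i, ∑ j, (W i j) ^ 2) + 1 with hCW
  have hCW1 : 1 ≤ CW := by
    have : 0 ≤ ∑ i, ∑ j, (W i j) ^ 2 :=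
      Finset.sum_nonneg fun i _ => Finset.sum_nonneg fun j _ => sq_nonneg _
    simp only [hCW]; linarith
  have hCWpos : 0 < CW := lt_of_lt_of_le one_pos hCW1
  refine ⟨c₀ / CW, div_pos hc₀ hCWpos, ?_⟩
  intro τ hτ xp ηt hub
  set v : Fin m → ℝ := K *ᵥ xp - K *ᵥ ηt with hv
  set φ : Fin m → ℝ := dzv ubar v with hφ
  set x : ((i : Fin q) × Fin (nd i)) → ℝ := W⁻¹ *ᵥ xp with hx
  set ψ : Fin m → ℝ := fun i => φ i / S i i with hψ
  set w : Fin m → ℝ := (Z * W⁻¹) *ᵥ xp + J *ᵥ ηt with hwdef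
  have hxp : W *ᵥ x = xp := by
    rw [hx, Matrix.mulVec_mulVec, hWinv, Matrix.one_mulVec]
  have hSψ : S *ᵥ ψ = φ := by
    rw [hSmv]; funext i
    rw [mul_comm]
    exact div_mul_cancel₀ _ (hSd i).ne'
  have hw : ∀ i, |w i| ≤ ubar i := by
    intro i
    have h1 : w i = Matrix.fromCols (Z * W⁻¹) J i ⬝ᵥ Sum.elim xp ηt := by
      have h2 := Matrix.fromCols_mulVec_sumElim (Z * W⁻¹) J xp ηt
      calc w i = (Matrix.fromCols (Z * W⁻¹) J *ᵥ Sum.elim xp ηt) i := by rw [h2]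
        _ = _ := rfl
    rw [h1]; exact hub i
  have hsec : ψ ⬝ᵥ (φ + v + w) ≤ 0 := by
    refine Finset.sum_nonpos fun i _ => ?_
    have hφi : φ i = Real.sign (v i) * min |v i| (ubar i) - v i := rfl
    have h := sector_aux (v i) (w i) (ubar i) (hubar i) (hw i)
    rw [← hφi] at h
    have heq : ψ i * (φ + v + w) i = φ i * (φ i + v i + w i) / S i i := by
      simp only [hψ, Pi.add_apply]
      rw [div_mul_eq_mul_div]
    rw [heq]
    exact div_nonpos_of_nonpos_of_nonneg h (hSd i).le
  -- abbreviations for the identity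
  have hxd : ∀ t, xp ⬝ᵥ (W⁻¹ *ᵥ t) = x ⬝ᵥ t := by
    intro t
    rw [dot_flip, Matrix.transpose_nonsing_inv, hWs, dotProduct_comm]
  set ξ : ((((i : Fin q) × Fin (nd i)) ⊕ ((i : Fin q) × Fin (nd i))) ⊕ Fin m) → ℝ :=
    Sum.elim (Sum.elim x ηt) ψ with hξdef
  have hexp : ξ ⬝ᵥ ((Matrix.fromBlocks
          (Matrix.fromBlocks
            ((A + B * K) * W + ((A + B * K) * W)ᵀ)
            (-(B * K))
            (-(B * K))ᵀ
            (Rmat nd σ R τ * A + (Rmat nd σ R τ * A)ᵀ - Sig nd σ * Rmat nd σ R τ))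
          (Matrix.fromRows (B * S - W * Kᵀ - Zᵀ) (Kᵀ - Jᵀ))
          (Matrix.fromRows (B * S - W * Kᵀ - Zᵀ) (Kᵀ - Jᵀ))ᵀ
          (-(2 : ℝ) • S)) *ᵥ ξ) =
      x ⬝ᵥ (((A + B * K) * W + ((A + B * K) * W)ᵀ) *ᵥ x) + x ⬝ᵥ ((-(B * K)) *ᵥ ηt)
      + ηt ⬝ᵥ ((-(B * K))ᵀ *ᵥ x)
      + ηt ⬝ᵥ ((Rmat nd σ R τ * A + (Rmat nd σ R τ * A)ᵀ - Sig nd σ * Rmat nd σ R τ) *ᵥ ηt)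
      + x ⬝ᵥ ((B * S - W * Kᵀ - Zᵀ) *ᵥ ψ) + ηt ⬝ᵥ ((Kᵀ - Jᵀ) *ᵥ ψ)
      + ψ ⬝ᵥ ((B * S - W * Kᵀ - Zᵀ)ᵀ *ᵥ x) + ψ ⬝ᵥ ((Kᵀ - Jᵀ)ᵀ *ᵥ ηt)
      + ψ ⬝ᵥ (((-2 : ℝ) • S) *ᵥ ψ) := by
    rw [hξdef]
    simp only [Matrix.fromBlocks_mulVec, Sum.elim_comp_inl, Sum.elim_comp_inr,
      Matrix.fromRows_mulVec, Matrix.transpose_fromRows, Matrix.fromCols_mulVec_sumElim,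
      sumElim_dotProduct_sumElim, dotProduct_add]
    ring
  have e0 : ((A + B * K) * W) *ᵥ x = (A + B * K) *ᵥ xp := by
    rw [← Matrix.mulVec_mulVec, hxp]
  have a1 : x ⬝ᵥ (((A + B * K) * W + ((A + B * K) * W)ᵀ) *ᵥ x)
      = 2 * (x ⬝ᵥ ((A + B * K) *ᵥ xp)) := by
    rw [Matrix.add_mulVec, dotProduct_add, dot_flip x ((A + B * K) * W)ᵀ x,
      Matrix.transpose_transpose, e0]
    ring
  have a2 : x ⬝ᵥ ((-(B * K)) *ᵥ ηt) = -(x ⬝ᵥ ((B * K) *ᵥ ηt)) := by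
    rw [Matrix.neg_mulVec, dotProduct_neg]
  have a3 : ηt ⬝ᵥ ((-(B * K))ᵀ *ᵥ x) = -(x ⬝ᵥ ((B * K) *ᵥ ηt)) := by
    rw [dot_flip, Matrix.transpose_transpose, Matrix.neg_mulVec, dotProduct_neg]
  have a4 : x ⬝ᵥ ((B * S - W * Kᵀ - Zᵀ) *ᵥ ψ)
      = x ⬝ᵥ (B *ᵥ φ) - ψ ⬝ᵥ (K *ᵥ xp) - ψ ⬝ᵥ (Z *ᵥ x) := by
    rw [Matrix.sub_mulVec, Matrix.sub_mulVec, dotProduct_sub, dotProduct_sub]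
    have h1 : x ⬝ᵥ ((B * S) *ᵥ ψ) = x ⬝ᵥ (B *ᵥ φ) := by
      rw [← Matrix.mulVec_mulVec, hSψ]
    have h2 : x ⬝ᵥ ((W * Kᵀ) *ᵥ ψ) = ψ ⬝ᵥ (K *ᵥ xp) := by
      rw [dot_flip, Matrix.transpose_mul, Matrix.transpose_transpose, hWs,
        ← Matrix.mulVec_mulVec, hxp]
    have h3 : x ⬝ᵥ (Zᵀ *ᵥ ψ) = ψ ⬝ᵥ (Z *ᵥ x) := by
      rw [dot_flip, Matrix.transpose_transpose]
    rw [h1, h2, h3]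
  have a5 : ψ ⬝ᵥ ((B * S - W * Kᵀ - Zᵀ)ᵀ *ᵥ x) = x ⬝ᵥ ((B * S - W * Kᵀ - Zᵀ) *ᵥ ψ) := by
    rw [dot_flip ψ (B * S - W * Kᵀ - Zᵀ)ᵀ x, Matrix.transpose_transpose]
  have a6 : ηt ⬝ᵥ ((Kᵀ - Jᵀ) *ᵥ ψ) = ψ ⬝ᵥ (K *ᵥ ηt) - ψ ⬝ᵥ (J *ᵥ ηt) := by
    rw [Matrix.sub_mulVec, dotProduct_sub, dot_flip ηt Kᵀ ψ, dot_flip ηt Jᵀ ψ,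
      Matrix.transpose_transpose, Matrix.transpose_transpose]
  have a7 : ψ ⬝ᵥ ((Kᵀ - Jᵀ)ᵀ *ᵥ ηt) = ηt ⬝ᵥ ((Kᵀ - Jᵀ) *ᵥ ψ) := by
    rw [dot_flip ψ (Kᵀ - Jᵀ)ᵀ ηt, Matrix.transpose_transpose]
  have a8 : ψ ⬝ᵥ (((-2 : ℝ) • S) *ᵥ ψ) = -2 * (ψ ⬝ᵥ φ) := by
    rw [Matrix.smul_mulVec, dotProduct_smul, hSψ, smul_eq_mul]
  have a9 : ψ ⬝ᵥ (φ + v + w) = ψ ⬝ᵥ φ + (ψ ⬝ᵥ (K *ᵥ xp) - ψ ⬝ᵥ (K *ᵥ ηt))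
      + (ψ ⬝ᵥ (Z *ᵥ x) + ψ ⬝ᵥ (J *ᵥ ηt)) := by
    rw [dotProduct_add, dotProduct_add, hv, hwdef, dotProduct_sub,
      dotProduct_add, ← Matrix.mulVec_mulVec, ← hx]
  -- the key identity
  have key : 2 * (xp ⬝ᵥ (W⁻¹ *ᵥ ((A + B * K) *ᵥ xp - (B * K) *ᵥ ηt + B *ᵥ φ))) +
      ηt ⬝ᵥ ((Rmat nd σ R τ * A + (Rmat nd σ R τ * A)ᵀ - Sig nd σ * Rmat nd σ R τ) *ᵥ ηt)
      = ξ ⬝ᵥ ((Matrix.fromBlocks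
          (Matrix.fromBlocks
            ((A + B * K) * W + ((A + B * K) * W)ᵀ)
            (-(B * K))
            (-(B * K))ᵀ
            (Rmat nd σ R τ * A + (Rmat nd σ R τ * A)ᵀ - Sig nd σ * Rmat nd σ R τ))
          (Matrix.fromRows (B * S - W * Kᵀ - Zᵀ) (Kᵀ - Jᵀ))
          (Matrix.fromRows (B * S - W * Kᵀ - Zᵀ) (Kᵀ - Jᵀ))ᵀ
          (-(2 : ℝ) • S)) *ᵥ ξ) + 2 * (ψ ⬝ᵥ (φ + v + w)) := by
    rw [hexp, a1, a2, a3, a4, a5, a4, a6, a7, a6, a8, a9, hxd, dotProduct_add,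
      dotProduct_sub]
    ring
  -- coercivity bound
  have hcoer := hco τ hτ ξ
  rw [Matrix.neg_mulVec, dotProduct_neg] at hcoer
  have hsum : ξ ⬝ᵥ ξ = x ⬝ᵥ x + ηt ⬝ᵥ ηt + ψ ⬝ᵥ ψ := by
    rw [hξdef]
    simp only [sumElim_dotProduct_sumElim]
  have hψψ : 0 ≤ ψ ⬝ᵥ ψ := dot_self_nonneg ψ
  have hηη : 0 ≤ ηt ⬝ᵥ ηt := dot_self_nonneg ηt
  have hxx : 0 ≤ x ⬝ᵥ x := dot_self_nonneg x
  -- Cauchy-Schwarz bound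
  have hxpb : xp ⬝ᵥ xp ≤ CW * (x ⬝ᵥ x) := by
    rw [← hxp]
    have hx2 : x ⬝ᵥ x = ∑ j, (x j) ^ 2 := by
      simp [dotProduct, sq]
    calc (W *ᵥ x) ⬝ᵥ (W *ᵥ x) = ∑ i, (∑ j, W i j * x j) ^ 2 := by
          simp [dotProduct, Matrix.mulVec, sq]
      _ ≤ ∑ i, (∑ j, (W i j) ^ 2) * (∑ j, (x j) ^ 2) :=
          Finset.sum_le_sum fun i _ => Finset.sum_mul_sq_le_sq_mul_sq _ _ _
      _ = (∑ i, ∑ j, (W i j) ^ 2) * (x ⬝ᵥ x) := by rw [hx2, ← Finset.sum_mul]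
      _ ≤ CW * (x ⬝ᵥ x) := by
          refine mul_le_mul_of_nonneg_right ?_ hxx
          simp only [hCW]; linarith
  -- final arithmetic
  set c₃ : ℝ := c₀ / CW with hc₃
  have hc₃pos : 0 < c₃ := div_pos hc₀ hCWpos
  have hc₃CW : c₃ * CW = c₀ := div_mul_cancel₀ _ hCWpos.ne'
  have hc₃le : c₃ ≤ c₀ := by
    rw [hc₃, div_le_iff₀ hCWpos]
    nlinarith
  have h1 : c₃ * (xp ⬝ᵥ xp) ≤ c₀ * (x ⬝ᵥ x) := by
    calc c₃ * (xp ⬝ᵥ xp) ≤ c₃ * (CW * (x ⬝ᵥ x)) :=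
          mul_le_mul_of_nonneg_left hxpb hc₃pos.le
      _ = c₀ * (x ⬝ᵥ x) := by rw [← hc₃CW]; ring
  have h2 : c₃ * (ηt ⬝ᵥ ηt) ≤ c₀ * (ηt ⬝ᵥ ηt) := mul_le_mul_of_nonneg_right hc₃le hηη
  rw [key]
  have hψ0 : 0 ≤ c₀ * (ψ ⬝ᵥ ψ) := mul_nonneg hc₀.le hψψ
  rw [hsum] at hcoer
  have hring : c₀ * (x ⬝ᵥ x + ηt ⬝ᵥ ηt + ψ ⬝ᵥ ψ)
      = c₀ * (x ⬝ᵥ x) + c₀ * (ηt ⬝ᵥ ηt) + c₀ * (ψ ⬝ᵥ ψ) := by ring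
  rw [hring] at hcoer
  linarith [hcoer, hsec, h1, h2, hψ0]
end

section
/- Let W ∈ 𝕊ⁿ₊, K ∈ ℝ^{m×n}, A ∈ ℝ^{n×n}, B ∈ ℝ^{n×m}, R_i ∈ 𝕊^{n_i}₊, S ∈ ℝ^{m×m} diagonal positive definite, σ₁,…,σ_q > 0, Z, J ∈ ℝ^{m×n}. Set R(τ) := ⊕_{i=1}^q e^{σ_i τ_i} R_i, Σ := ⊕_{i=1}^q σ_i I_{n_i}, R̂ := ⊕_{i=1}^q R_i, and 𝒵 := { ⊕_{i=1}^q ψ_i I_{n_i} : ψ_i ∈ {1, e^{σ_i T₂^{(i)}}} }. Then the symmetric block matrix M(τ) := [[He((A+BK)W), −BK, BS − WKᵀ − Zᵀ], [⋆, He(R(τ)A) − Σ R(τ), Kᵀ − Jᵀ], [⋆, ⋆, −2S]] is negative definite for all τ ∈ T if and only if 𝔑(Ψ) := [[He((A+BK)W), −BK, BS − WKᵀ − Zᵀ], [⋆, He(R̂ΨA) − Σ R̂Ψ, Kᵀ − Jᵀ], [⋆, ⋆, −2S]] is negative definite for all Ψ ∈ 𝒵. -/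
open Matrix

section Aux

variable {q m : ℕ} {nd : Fin q → ℕ}

/-- The diagonal scaling matrix `⊕ᵢ ψᵢ I`. -/
noncomputable def Dmat (nd : Fin q → ℕ) (ψ : Fin q → ℝ) :
    Matrix ((i : Fin q) × Fin (nd i)) ((i : Fin q) × Fin (nd i)) ℝ :=
  Matrix.blockDiagonal' fun i => ψ i • (1 : Matrix (Fin (nd i)) (Fin (nd i)) ℝ)

/-- The big block matrix as a function of the middle scaling matrix `D`. -/
noncomputable def bigN
    (A : Matrix ((i : Fin q) × Fin (nd i)) ((i : Fin q) × Fin (nd i)) ℝ)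
    (B : Matrix ((i : Fin q) × Fin (nd i)) (Fin m) ℝ)
    (K : Matrix (Fin m) ((i : Fin q) × Fin (nd i)) ℝ)
    (W : Matrix ((i : Fin q) × Fin (nd i)) ((i : Fin q) × Fin (nd i)) ℝ)
    (S : Matrix (Fin m) (Fin m) ℝ)
    (Z J : Matrix (Fin m) ((i : Fin q) × Fin (nd i)) ℝ)
    (Sg Rh D : Matrix ((i : Fin q) × Fin (nd i)) ((i : Fin q) × Fin (nd i)) ℝ) :
    Matrix ((((i : Fin q) × Fin (nd i)) ⊕ ((i : Fin q) × Fin (nd i))) ⊕ Fin m)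
      ((((i : Fin q) × Fin (nd i)) ⊕ ((i : Fin q) × Fin (nd i))) ⊕ Fin m) ℝ :=
  -(Matrix.fromBlocks
      (Matrix.fromBlocks
        ((A + B * K) * W + ((A + B * K) * W)ᵀ)
        (-(B * K))
        (-(B * K))ᵀ
        (Rh * D * A + (Rh * D * A)ᵀ - Sg * (Rh * D)))
      (Matrix.fromRows (B * S - W * Kᵀ - Zᵀ) (Kᵀ - Jᵀ))
      (Matrix.fromRows (B * S - W * Kᵀ - Zᵀ) (Kᵀ - Jᵀ))ᵀ
      (-(2 : ℝ) • S))

lemma comb_const {n m : Type*} {a b : ℝ} (hab : a + b = 1) (X : Matrix n m ℝ) :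
    a • X + b • X = X := by rw [← add_smul, hab, one_smul]

lemma bigN_affine
    (A : Matrix ((i : Fin q) × Fin (nd i)) ((i : Fin q) × Fin (nd i)) ℝ)
    (B : Matrix ((i : Fin q) × Fin (nd i)) (Fin m) ℝ)
    (K : Matrix (Fin m) ((i : Fin q) × Fin (nd i)) ℝ)
    (W : Matrix ((i : Fin q) × Fin (nd i)) ((i : Fin q) × Fin (nd i)) ℝ)
    (S : Matrix (Fin m) (Fin m) ℝ)
    (Z J : Matrix (Fin m) ((i : Fin q) × Fin (nd i)) ℝ)
    (Sg Rh D1 D2 : Matrix ((i : Fin q) × Fin (nd i)) ((i : Fin q) × Fin (nd i)) ℝ)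
    {a b : ℝ} (hab : a + b = 1) :
    bigN A B K W S Z J Sg Rh (a • D1 + b • D2)
      = a • bigN A B K W S Z J Sg Rh D1 + b • bigN A B K W S Z J Sg Rh D2 := by
  unfold bigN
  rw [smul_neg, smul_neg, ← neg_add]
  congr 1
  simp only [fromBlocks_smul, fromBlocks_add]
  rw [fromBlocks_inj]
  refine ⟨?_, (comb_const hab _).symm, (comb_const hab _).symm, (comb_const hab _).symm⟩
  rw [fromBlocks_inj]
  refine ⟨(comb_const hab _).symm, (comb_const hab _).symm, (comb_const hab _).symm, ?_⟩
  simp only [Matrix.mul_add, Matrix.add_mul, Matrix.mul_smul, Matrix.smul_mul,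
    transpose_add, transpose_smul, smul_sub, smul_add]
  abel

lemma Dmat_comb (ψ1 ψ2 ψ3 : Fin q → ℝ) (a b : ℝ)
    (h : ∀ j, ψ3 j = a * ψ1 j + b * ψ2 j) :
    Dmat nd ψ3 = a • Dmat nd ψ1 + b • Dmat nd ψ2 := by
  unfold Dmat
  ext ⟨j, x⟩ ⟨k, y⟩
  simp only [blockDiagonal'_apply, Matrix.add_apply, Matrix.smul_apply, smul_eq_mul]
  split
  · next hjk =>
    subst hjk
    simp only [Matrix.smul_apply, Matrix.one_apply, smul_eq_mul, h j]
    split <;> ring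
  · ring

lemma posDef_smul_real {n : Type*} [Fintype n] {M : Matrix n n ℝ} (hM : M.PosDef)
    {c : ℝ} (hc : 0 < c) : (c • M).PosDef := by
  refine ⟨?_, fun x hx => ?_⟩
  · unfold Matrix.IsHermitian
    rw [conjTranspose_smul, hM.1]
    simp
  · exact (hM.smul hc).2 hx

lemma posDef_comb {n : Type*} [Fintype n] {M1 M2 : Matrix n n ℝ}
    (h1 : M1.PosDef) (h2 : M2.PosDef) {lam : ℝ} (h0 : 0 ≤ lam) (h1' : lam ≤ 1) :
    ((1 - lam) • M1 + lam • M2).PosDef := by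
  rcases h0.eq_or_lt with rfl | hl
  · simpa using h1
  rcases h1'.eq_or_lt with rfl | hr
  · simpa using h2
  exact (posDef_smul_real h1 (by linarith)).add (posDef_smul_real h2 hl)

lemma box_lemma {n : Type*} [Fintype n] (N : (Fin q → ℝ) → Matrix n n ℝ)
    (haff : ∀ (ψ1 ψ2 ψ3 : Fin q → ℝ) (a b : ℝ), a + b = 1 →
      (∀ j, ψ3 j = a * ψ1 j + b * ψ2 j) → N ψ3 = a • N ψ1 + b • N ψ2)
    (E : Fin q → ℝ) (hE : ∀ i, 1 < E i)
    (hvert : ∀ ψ, (∀ i, ψ i = 1 ∨ ψ i = E i) → (N ψ).PosDef) :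
    ∀ ψ, (∀ i, ψ i ∈ Set.Icc 1 (E i)) → (N ψ).PosDef := by
  suffices h : ∀ s : Finset (Fin q), ∀ ψ : Fin q → ℝ,
      (∀ i, ψ i ∈ Set.Icc 1 (E i)) → (∀ i, i ∉ s → ψ i = 1 ∨ ψ i = E i) → (N ψ).PosDef by
    intro ψ hψ
    exact h Finset.univ ψ hψ (fun i hi => absurd (Finset.mem_univ i) hi)
  intro s
  induction s using Finset.induction with
  | empty =>
    intro ψ hψ hv
    exact hvert ψ fun i => hv i (by simp)
  | @insert i s hi ih =>
    intro ψ hψ hv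
    have hEi := hE i
    have hE1 : (0 : ℝ) < E i - 1 := by linarith
    set lam := (ψ i - 1) / (E i - 1) with hlam
    have h0 : 0 ≤ lam := div_nonneg (by have := (hψ i).1; linarith) hE1.le
    have h1 : lam ≤ 1 := by
      rw [hlam, div_le_one hE1]
      have := (hψ i).2; linarith
    have key : N ψ = (1 - lam) • N (Function.update ψ i 1)
        + lam • N (Function.update ψ i (E i)) := by
      apply haff _ _ _ _ _ (by ring)
      intro j
      by_cases hj : j = i
      · subst hj
        simp only [Function.update_self]
        have h2 : lam * (E j - 1) = ψ j - 1 := div_mul_cancel₀ _ hE1.ne'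
        linear_combination -h2
      · simp only [Function.update_of_ne hj]
        ring
    rw [key]
    refine posDef_comb (ih _ ?_ ?_) (ih _ ?_ ?_) h0 h1
    · intro j
      by_cases hj : j = i
      · subst hj; simp only [Function.update_self]
        exact ⟨le_refl 1, (hE j).le⟩
      · simp only [Function.update_of_ne hj]; exact hψ j
    · intro j hj
      by_cases hji : j = i
      · subst hji; simp [Function.update_self]
      · simp only [Function.update_of_ne hji]
        exact hv j (by simp [hji, hj])
    · intro j
      by_cases hj : j = i
      · subst hj; simp only [Function.update_self]
        exact ⟨(hE j).le, le_refl _⟩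
      · simp only [Function.update_of_ne hj]; exact hψ j
    · intro j hj
      by_cases hji : j = i
      · subst hji; simp [Function.update_self]
      · simp only [Function.update_of_ne hji]
        exact hv j (by simp [hji, hj])

lemma Rmat_eq (σ : Fin q → ℝ) (R : (i : Fin q) → Matrix (Fin (nd i)) (Fin (nd i)) ℝ)
    (τ : Fin q → ℝ) :
    Rmat nd σ R τ = Matrix.blockDiagonal' R * Dmat nd (fun i => Real.exp (σ i * τ i)) := by
  unfold Rmat Dmat
  rw [← blockDiagonal'_mul]
  exact congrArg _ (funext fun i => by rw [Matrix.mul_smul, mul_one])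

end Aux

/-- Proposition: vertex reduction. The clock-dependent matrix
`M(τ) = [[He((A+BK)W), −BK, BS − WKᵀ − Zᵀ], [⋆, He(R(τ)A) − Σ R(τ), Kᵀ − Jᵀ], [⋆, ⋆, −2S]]`
is negative definite for all `τ ∈ T` if and only if
`𝔑(Ψ) = [[He((A+BK)W), −BK, BS − WKᵀ − Zᵀ], [⋆, He(R̂ΨA) − Σ R̂Ψ, Kᵀ − Jᵀ], [⋆, ⋆, −2S]]`
is negative definite for every vertex `Ψ = ⊕ᵢ ψᵢ I_{nᵢ}` with `ψᵢ ∈ {1, e^{σᵢ T₂⁽ⁱ⁾}}`. -/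
theorem statement8 (q m : ℕ) (hq : 0 < q) (nd : Fin q → ℕ) (hnd : ∀ i, 0 < nd i)
    (T2 : Fin q → ℝ) (hT2 : ∀ i, 0 < T2 i)
    (A : Matrix ((i : Fin q) × Fin (nd i)) ((i : Fin q) × Fin (nd i)) ℝ)
    (B : Matrix ((i : Fin q) × Fin (nd i)) (Fin m) ℝ)
    (K : Matrix (Fin m) ((i : Fin q) × Fin (nd i)) ℝ)
    (W : Matrix ((i : Fin q) × Fin (nd i)) ((i : Fin q) × Fin (nd i)) ℝ) (hW : W.PosDef)
    (R : (i : Fin q) → Matrix (Fin (nd i)) (Fin (nd i)) ℝ) (hR : ∀ i, (R i).PosDef)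
    (S : Matrix (Fin m) (Fin m) ℝ) (hSdiag : S.IsDiag) (hSpos : S.PosDef)
    (σ : Fin q → ℝ) (hσ : ∀ i, 0 < σ i)
    (Z J : Matrix (Fin m) ((i : Fin q) × Fin (nd i)) ℝ) :
    (∀ τ : Fin q → ℝ, (∀ i, τ i ∈ Set.Icc 0 (T2 i)) →
      (-(Matrix.fromBlocks
          (Matrix.fromBlocks
            ((A + B * K) * W + ((A + B * K) * W)ᵀ)
            (-(B * K))
            (-(B * K))ᵀ
            (Rmat nd σ R τ * A + (Rmat nd σ R τ * A)ᵀ - Sig nd σ * Rmat nd σ R τ))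
          (Matrix.fromRows (B * S - W * Kᵀ - Zᵀ) (Kᵀ - Jᵀ))
          (Matrix.fromRows (B * S - W * Kᵀ - Zᵀ) (Kᵀ - Jᵀ))ᵀ
          (-(2 : ℝ) • S))).PosDef) ↔
    (∀ ψ : Fin q → ℝ, (∀ i, ψ i = 1 ∨ ψ i = Real.exp (σ i * T2 i)) →
      (-(Matrix.fromBlocks
          (Matrix.fromBlocks
            ((A + B * K) * W + ((A + B * K) * W)ᵀ)
            (-(B * K))
            (-(B * K))ᵀ
            ((Matrix.blockDiagonal' R *
                (Matrix.blockDiagonal' fun i =>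
                  ψ i • (1 : Matrix (Fin (nd i)) (Fin (nd i)) ℝ)) * A) +
              (Matrix.blockDiagonal' R *
                (Matrix.blockDiagonal' fun i =>
                  ψ i • (1 : Matrix (Fin (nd i)) (Fin (nd i)) ℝ)) * A)ᵀ -
              Sig nd σ *
                (Matrix.blockDiagonal' R *
                  (Matrix.blockDiagonal' fun i =>
                    ψ i • (1 : Matrix (Fin (nd i)) (Fin (nd i)) ℝ)))))
          (Matrix.fromRows (B * S - W * Kᵀ - Zᵀ) (Kᵀ - Jᵀ))
          (Matrix.fromRows (B * S - W * Kᵀ - Zᵀ) (Kᵀ - Jᵀ))ᵀ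
          (-(2 : ℝ) • S))).PosDef) := by
  have hstmt : ∀ ψ : Fin q → ℝ,
      (-(Matrix.fromBlocks
          (Matrix.fromBlocks
            ((A + B * K) * W + ((A + B * K) * W)ᵀ)
            (-(B * K))
            (-(B * K))ᵀ
            ((Matrix.blockDiagonal' R *
                (Matrix.blockDiagonal' fun i =>
                  ψ i • (1 : Matrix (Fin (nd i)) (Fin (nd i)) ℝ)) * A) +
              (Matrix.blockDiagonal' R *
                (Matrix.blockDiagonal' fun i =>
                  ψ i • (1 : Matrix (Fin (nd i)) (Fin (nd i)) ℝ)) * A)ᵀ -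
              Sig nd σ *
                (Matrix.blockDiagonal' R *
                  (Matrix.blockDiagonal' fun i =>
                    ψ i • (1 : Matrix (Fin (nd i)) (Fin (nd i)) ℝ)))))
          (Matrix.fromRows (B * S - W * Kᵀ - Zᵀ) (Kᵀ - Jᵀ))
          (Matrix.fromRows (B * S - W * Kᵀ - Zᵀ) (Kᵀ - Jᵀ))ᵀ
          (-(2 : ℝ) • S)))
        = bigN A B K W S Z J (Sig nd σ) (Matrix.blockDiagonal' R) (Dmat nd ψ) := by
    intro ψ; rfl
  constructor
  · -- forward: vertices are particular clock values
    intro h ψ hψ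
    classical
    set τ : Fin q → ℝ := fun i => if ψ i = 1 then 0 else T2 i with hτ
    have hτmem : ∀ i, τ i ∈ Set.Icc 0 (T2 i) := by
      intro i
      by_cases hi : ψ i = 1 <;> simp [hτ, hi, (hT2 i).le, le_refl]
    have hψτ : (fun i => Real.exp (σ i * τ i)) = ψ := by
      funext i
      by_cases hi : ψ i = 1
      · simp [hτ, hi]
      · rcases hψ i with h1 | h2
        · exact absurd h1 hi
        · simp [hτ, hi, h2.symm]
    have := h τ hτmem
    rw [Rmat_eq σ R τ, hψτ] at this
    exact this
  · -- backward: convexity / vertex reduction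
    intro h τ hτ
    rw [Rmat_eq σ R τ]
    set ψ : Fin q → ℝ := fun i => Real.exp (σ i * τ i) with hψdef
    have key := box_lemma (fun φ => bigN A B K W S Z J (Sig nd σ) (Matrix.blockDiagonal' R) (Dmat nd φ))
      (fun ψ1 ψ2 ψ3 a b hab hcomb => by
        beta_reduce
        rw [Dmat_comb ψ1 ψ2 ψ3 a b hcomb]
        exact bigN_affine A B K W S Z J _ _ _ _ hab)
      (fun i => Real.exp (σ i * T2 i))
      (fun i => by
        have : 0 < σ i * T2 i := mul_pos (hσ i) (hT2 i)
        calc (1:ℝ) = Real.exp 0 := (Real.exp_zero).symm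
        _ < Real.exp (σ i * T2 i) := Real.exp_lt_exp.mpr this)
      (fun φ hφ => h φ hφ)
      ψ
      (fun i => by
        constructor
        · calc (1:ℝ) = Real.exp 0 := (Real.exp_zero).symm
          _ ≤ ψ i := Real.exp_le_exp.mpr (mul_nonneg (hσ i).le (hτ i).1)
        · exact Real.exp_le_exp.mpr (mul_le_mul_of_nonneg_left (hτ i).2 (hσ i).le))
    exact key
end
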